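/- arXiv:2206.09578 — 4 statements merged into one kernel-verified Lean document; each statement's English description precedes it below -/
import Mathlib

section
/- Let F : ℝ^d → ℝ be differentiable, L-smooth and satisfy the μ-PL condition with global minimizer w*. Fix a point w ∈ ℝ^d and a step size α with 0 < α ≤ 1/L and α ≤ 1/μ. Let g and ε be square-integrable random vectors in ℝ^d on a probability space with E[g] = ∇F(w) and E[⟨g, ε⟩] = ⟨∇F(w), E[ε]⟩, and set w⁺ = w − α(g + ε). Then E[F(w⁺)] − F(w*) ≤ (1 − μα)(F(w) − F(w*)) + (α(1 − Lα)/2)‖E[ε]‖² + (Lα²/2)E[‖ε‖²] + (Lα²/2)E[‖g‖²]. -/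
open MeasureTheory
open scoped RealInnerProductSpace

lemma descent_aux {d : ℕ} (F : EuclideanSpace ℝ (Fin d) → ℝ) (L : ℝ)
    (hdiff : Differentiable ℝ F)
    (hsmooth : ∀ w w' : EuclideanSpace ℝ (Fin d),
      ‖gradient F w - gradient F w'‖ ≤ L * ‖w - w'‖)
    (x y : EuclideanSpace ℝ (Fin d)) :
    F y ≤ F x + ⟪gradient F x, y - x⟫ + L / 2 * ‖y - x‖ ^ 2 := by
  set ψ : ℝ → EuclideanSpace ℝ (Fin d) := fun t => x + t • (y - x) with hψ
  have hcontG : Continuous (gradient F) := by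
    rcases le_or_gt L 0 with hL | hL
    · have : ∀ a b, gradient F a = gradient F b := by
        intro a b
        have h := hsmooth a b
        have : ‖gradient F a - gradient F b‖ ≤ 0 :=
          h.trans (mul_nonpos_of_nonpos_of_nonneg hL (norm_nonneg _))
        have := le_antisymm this (norm_nonneg _)
        rwa [norm_eq_zero, sub_eq_zero] at this
      have : gradient F = fun _ => gradient F x := funext fun a => this a x
      rw [this]; exact continuous_const
    · exact (LipschitzWith.of_dist_le_mul (K := ⟨L, hL.le⟩) (fun a b => by
        rw [dist_eq_norm, dist_eq_norm]; exact hsmooth a b)).continuous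
  have hψcont : Continuous ψ := continuous_const.add (continuous_id.smul continuous_const)
  have hderiv : ∀ t : ℝ, HasDerivAt (fun t => F (ψ t)) ⟪gradient F (ψ t), y - x⟫ t := by
    intro t
    have hψd : HasDerivAt ψ (y - x) t := by
      simpa [hψ] using ((hasDerivAt_id t).smul_const (y - x)).const_add x
    have hF : HasFDerivAt F (InnerProductSpace.toDual ℝ _ (gradient F (ψ t))) (ψ t) :=
      (hdiff (ψ t)).hasGradientAt.hasFDerivAt
    exact hF.comp_hasDerivAt t hψd
  have hcont : Continuous fun t => ⟪gradient F (ψ t), y - x⟫ :=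
    (hcontG.comp hψcont).inner continuous_const
  have hint : F (ψ 1) - F (ψ 0) = ∫ t in (0:ℝ)..1, ⟪gradient F (ψ t), y - x⟫ :=
    (intervalIntegral.integral_eq_sub_of_hasDerivAt (fun t _ => hderiv t)
      (hcont.intervalIntegrable 0 1)).symm
  have hψ0 : ψ 0 = x := by simp [hψ]
  have hψ1 : ψ 1 = y := by simp [hψ]
  have hbound : ∀ t ∈ Set.Icc (0:ℝ) 1,
      ⟪gradient F (ψ t), y - x⟫ ≤ ⟪gradient F x, y - x⟫ + L * t * ‖y - x‖ ^ 2 := by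
    intro t ht
    have h1 : ⟪gradient F (ψ t) - gradient F x, y - x⟫ ≤ ‖gradient F (ψ t) - gradient F x‖ * ‖y - x‖ :=
      real_inner_le_norm _ _
    have h2 : ‖gradient F (ψ t) - gradient F x‖ ≤ L * (t * ‖y - x‖) := by
      have := hsmooth (ψ t) x
      simpa [hψ, norm_smul, abs_of_nonneg ht.1] using this
    have h3 : ‖gradient F (ψ t) - gradient F x‖ * ‖y - x‖ ≤ L * (t * ‖y - x‖) * ‖y - x‖ :=
      mul_le_mul_of_nonneg_right h2 (norm_nonneg _)
    have h4 : ⟪gradient F (ψ t) - gradient F x, y - x⟫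
        = ⟪gradient F (ψ t), y - x⟫ - ⟪gradient F x, y - x⟫ := inner_sub_left _ _ _
    nlinarith [sq_nonneg ‖y - x‖]
  have hmono : (∫ t in (0:ℝ)..1, ⟪gradient F (ψ t), y - x⟫)
      ≤ ∫ t in (0:ℝ)..1, (⟪gradient F x, y - x⟫ + L * t * ‖y - x‖ ^ 2) := by
    apply intervalIntegral.integral_mono_on (by norm_num)
      (hcont.intervalIntegrable 0 1)
      (((by fun_prop : Continuous fun t : ℝ => ⟪gradient F x, y - x⟫ + L * t * ‖y - x‖ ^ 2)).intervalIntegrable 0 1)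
    exact hbound
  have hval : (∫ t in (0:ℝ)..1, (⟪gradient F x, y - x⟫ + L * t * ‖y - x‖ ^ 2))
      = ⟪gradient F x, y - x⟫ + L / 2 * ‖y - x‖ ^ 2 := by
    rw [intervalIntegral.integral_add ((continuous_const (y := ⟪gradient F x, y - x⟫)).intervalIntegrable 0 1)
      (((by fun_prop : Continuous fun t : ℝ => L * t * ‖y - x‖ ^ 2)).intervalIntegrable 0 1)]
    have : (∫ t in (0:ℝ)..1, L * t * ‖y - x‖ ^ 2)
        = (L * ‖y - x‖ ^ 2) * ∫ t in (0:ℝ)..1, t := by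
      rw [← intervalIntegral.integral_const_mul]
      congr 1; ext t; ring
    rw [this]
    simp [integral_id]
    ring
  have := hint
  rw [hψ0, hψ1] at this
  linarith [hmono, hval.symm ▸ hmono, this ▸ hmono]

/-- One-step descent lemma (eq. (62) of the paper) for gradient descent with a
stochastic gradient `g` perturbed by an additive aggregation error `ε`, for an
`L`-smooth function `F` satisfying the `μ`-PL condition with global minimizer
`w*`. -/
theorem stmt0 {d : ℕ} {Ω : Type*} [MeasurableSpace Ω] (P : Measure Ω)
    [IsProbabilityMeasure P]
    (F : EuclideanSpace ℝ (Fin d) → ℝ) (L μ α : ℝ)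
    (hL : 0 < L) (hμ : 0 < μ)
    (hdiff : Differentiable ℝ F)
    (hsmooth : ∀ w w' : EuclideanSpace ℝ (Fin d),
      ‖gradient F w - gradient F w'‖ ≤ L * ‖w - w'‖)
    (wstar : EuclideanSpace ℝ (Fin d))
    (hmin : ∀ v : EuclideanSpace ℝ (Fin d), F wstar ≤ F v)
    (hPL : ∀ w : EuclideanSpace ℝ (Fin d),
      ‖gradient F w‖ ^ 2 ≥ 2 * μ * (F w - F wstar))
    (w : EuclideanSpace ℝ (Fin d))
    (hα0 : 0 < α) (hαL : α ≤ 1 / L) (hαμ : α ≤ 1 / μ)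
    (g ε : Ω → EuclideanSpace ℝ (Fin d))
    (hg2 : MemLp g 2 P) (hε2 : MemLp ε 2 P)
    (hgmean : ∫ ω, g ω ∂P = gradient F w)
    (hcross : ∫ ω, ⟪g ω, ε ω⟫ ∂P = ⟪gradient F w, ∫ ω, ε ω ∂P⟫)
    (wplus : Ω → EuclideanSpace ℝ (Fin d))
    (hwplus : ∀ ω, wplus ω = w - α • (g ω + ε ω)) :
    (∫ ω, F (wplus ω) ∂P) - F wstar ≤
      (1 - μ * α) * (F w - F wstar)
        + (α * (1 - L * α) / 2) * ‖∫ ω, ε ω ∂P‖ ^ 2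
        + (L * α ^ 2 / 2) * ∫ ω, ‖ε ω‖ ^ 2 ∂P
        + (L * α ^ 2 / 2) * ∫ ω, ‖g ω‖ ^ 2 ∂P := by
  set Gw := gradient F w with hGw
  set Eε := ∫ ω, ε ω ∂P with hEε
  set h : Ω → ℝ := fun ω => F w - α * ⟪Gw, g ω⟫ - α * ⟪Gw, ε ω⟫
      + L * α ^ 2 / 2 * (‖g ω‖ ^ 2 + 2 * ⟪g ω, ε ω⟫ + ‖ε ω‖ ^ 2) with hh
  have hg1 : Integrable g P := hg2.integrable one_le_two
  have hε1 : Integrable ε P := hε2.integrable one_le_two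
  have hgsq : Integrable (fun ω => ‖g ω‖ ^ 2) P :=
    (memLp_two_iff_integrable_sq_norm hg2.1).mp hg2
  have hεsq : Integrable (fun ω => ‖ε ω‖ ^ 2) P :=
    (memLp_two_iff_integrable_sq_norm hε2.1).mp hε2
  have hcrossInt : Integrable (fun ω => ⟪g ω, ε ω⟫) P := by
    refine Integrable.mono' ((hgsq.add hεsq).div_const 2) (hg2.1.inner hε2.1) ?_
    filter_upwards with ω
    have h1 : |⟪g ω, ε ω⟫| ≤ ‖g ω‖ * ‖ε ω‖ := abs_real_inner_le_norm _ _
    have h2 : ‖g ω‖ * ‖ε ω‖ ≤ (‖g ω‖ ^ 2 + ‖ε ω‖ ^ 2) / 2 := by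
      nlinarith [sq_nonneg (‖g ω‖ - ‖ε ω‖)]
    simpa [Real.norm_eq_abs] using h1.trans h2
  have hint1 : Integrable (fun ω => ⟪Gw, g ω⟫) P := hg1.const_inner Gw
  have hint2 : Integrable (fun ω => ⟪Gw, ε ω⟫) P := hε1.const_inner Gw
  have hA1 : Integrable (fun ω => α * ⟪Gw, g ω⟫) P := hint1.const_mul α
  have hA2 : Integrable (fun ω => α * ⟪Gw, ε ω⟫) P := hint2.const_mul α
  have hB : Integrable (fun ω => F w - α * ⟪Gw, g ω⟫) P := (integrable_const _).sub hA1
  have hC : Integrable (fun ω => F w - α * ⟪Gw, g ω⟫ - α * ⟪Gw, ε ω⟫) P := hB.sub hA2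
  have hD : Integrable (fun ω => 2 * ⟪g ω, ε ω⟫) P := hcrossInt.const_mul 2
  have hE : Integrable (fun ω => ‖g ω‖ ^ 2 + 2 * ⟪g ω, ε ω⟫) P := hgsq.add hD
  have hS : Integrable (fun ω => ‖g ω‖ ^ 2 + 2 * ⟪g ω, ε ω⟫ + ‖ε ω‖ ^ 2) P := hE.add hεsq
  have hF2 : Integrable
      (fun ω => L * α ^ 2 / 2 * (‖g ω‖ ^ 2 + 2 * ⟪g ω, ε ω⟫ + ‖ε ω‖ ^ 2)) P :=
    hS.const_mul _
  have hhInt : Integrable h P := hC.add hF2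
  -- pointwise bound
  have hpoint : ∀ ω, F (wplus ω) ≤ h ω := by
    intro ω
    have hdw : wplus ω - w = -(α • (g ω + ε ω)) := by rw [hwplus]; abel
    have h1 : ⟪Gw, wplus ω - w⟫ = -(α * (⟪Gw, g ω⟫ + ⟪Gw, ε ω⟫)) := by
      rw [hdw, inner_neg_right, real_inner_smul_right, inner_add_right]
    have h2 : ‖wplus ω - w‖ ^ 2 = α ^ 2 * (‖g ω‖ ^ 2 + 2 * ⟪g ω, ε ω⟫ + ‖ε ω‖ ^ 2) := by
      rw [hdw, norm_neg, norm_smul, mul_pow, ← norm_add_sq_real]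
      simp [sq_abs]
    calc F (wplus ω) ≤ F w + ⟪Gw, wplus ω - w⟫ + L / 2 * ‖wplus ω - w‖ ^ 2 :=
          descent_aux F L hdiff hsmooth w (wplus ω)
      _ = h ω := by rw [h1, h2, hh]; ring
  -- integrability of F ∘ wplus
  have hwm : AEStronglyMeasurable wplus P := by
    have : AEStronglyMeasurable (fun ω => w - α • (g ω + ε ω)) P :=
      aestronglyMeasurable_const.sub ((hg2.1.add hε2.1).const_smul α)
    exact this.congr (Filter.Eventually.of_forall fun ω => (hwplus ω).symm)
  have hFInt : Integrable (fun ω => F (wplus ω)) P := by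
    refine Integrable.mono' ((integrable_const |F wstar|).add
      (hhInt.sub (integrable_const (F wstar)))) (hdiff.continuous.comp_aestronglyMeasurable hwm) ?_
    filter_upwards with ω
    have h1 := hpoint ω
    have h2 := hmin (wplus ω)
    simp only [Pi.add_apply, Pi.sub_apply, Real.norm_eq_abs]
    rcases abs_cases (F (wplus ω)) with ⟨he, _⟩ | ⟨he, _⟩ <;>
      rcases abs_cases (F wstar) with ⟨he2, _⟩ | ⟨he2, _⟩ <;> linarith
  have hIle : ∫ ω, F (wplus ω) ∂P ≤ ∫ ω, h ω ∂P :=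
    integral_mono hFInt hhInt hpoint
  -- compute ∫ h
  have e1 : ∫ ω, ⟪Gw, g ω⟫ ∂P = ‖Gw‖ ^ 2 := by
    rw [integral_inner hg1, hgmean]; exact real_inner_self_eq_norm_sq _
  have e2 : ∫ ω, ⟪Gw, ε ω⟫ ∂P = ⟪Gw, Eε⟫ := integral_inner hε1 Gw
  have hIh : ∫ ω, h ω ∂P = F w - α * ‖Gw‖ ^ 2 - α * ⟪Gw, Eε⟫
      + L * α ^ 2 / 2 * ((∫ ω, ‖g ω‖ ^ 2 ∂P) + 2 * ⟪Gw, Eε⟫ + ∫ ω, ‖ε ω‖ ^ 2 ∂P) := by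
    simp only [hh]
    rw [integral_add hC hF2, integral_sub hB hA2,
      integral_sub (integrable_const (F w)) hA1,
      integral_const, integral_const_mul, integral_const_mul, integral_const_mul,
      integral_add hE hεsq, integral_add hgsq hD,
      integral_const_mul, e1, e2, hcross]
    simp
  -- final scalar inequality
  have hq : (0:ℝ) ≤ ‖Gw‖ ^ 2 + 2 * ⟪Gw, Eε⟫ + ‖Eε‖ ^ 2 := by
    rw [← norm_add_sq_real]; positivity
  have hLα : L * α ≤ 1 := by
    rw [le_div_iff₀ hL] at hαL; linarith [mul_comm α L]
  have hPLw := hPL w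
  have hminw := hmin w
  rw [hIh] at hIle
  nlinarith [mul_nonneg (mul_nonneg hα0.le (sub_nonneg.mpr hLα)) hq,
    mul_nonneg hα0.le (sub_nonneg.mpr hPLw),
    mul_nonneg (mul_nonneg (mul_nonneg hL.le hα0.le) hα0.le) (sq_nonneg ‖Gw‖)]
end

section
/- Consider K virtual energy-deficit queues over one period of ρ rounds starting at round t₀: for each device k ∈ {1,…,K}, e_k(t₀) ≥ 0 is given and e_k(t+1) = max{ e_k(t) + x_k(t), 0 } for t₀ ≤ t ≤ t₀+ρ−1, where x_k(t) = p_k^†(t) − P̄_k with p_k^†(t) ≥ 0 the online power consumption and P̄_k > 0 the per-round average power budget. Suppose: (i) |p_k(t) − P̄_k| ≤ E_max for all k, t and for both the online powers p_k^†(t) and the offline powers p_k^*(t) ≥ 0; (ii) per-round drift-plus-penalty minimization: for every round t in the period, V·G_t^† + Σ_k e_k(t)·p_k^†(t) ≤ V·G_t^* + Σ_k e_k(t)·p_k^*(t), where V > 0 and G_t^†, G_t^* ≥ 0 are the per-round (weighted) optimality-gap contributions of the online and offline policies. Then Σ_{t=t₀}^{t₀+ρ−1} G_t^† ≤ Σ_{t=t₀}^{t₀+ρ−1}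 G_t^* + C/V, where C = ρ·C_e + (1/2)Σ_k e_k(t₀)² + E_max · Σ_{t=t₀}^{t₀+ρ−1} Σ_k ( e_k(t₀) + (t − t₀)·E_max ) and C_e = (1/2)K·E_max². -/
/-- Performance part of Theorem 2 of the paper (O(1/V)-optimality, eq. (35)),
stated for one period of `ρ` rounds starting at round `t₀`: under the virtual
energy-deficit queue dynamics, bounded power deviations, and per-round
drift-plus-penalty minimization, the online per-round optimality-gap
contributions are within `C/V` of the offline ones. -/
theorem stmt5 (K ρ t₀ : ℕ) (hK : 1 ≤ K) (hρ : 1 ≤ ρ)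
    (Emax V : ℝ) (hV : 0 < V)
    (e : Fin K → ℕ → ℝ) (pdag pstar : Fin K → ℕ → ℝ) (Pbar : Fin K → ℝ)
    (Gdag Gstar : ℕ → ℝ)
    (he0 : ∀ k, 0 ≤ e k t₀)
    (hPbar : ∀ k, 0 < Pbar k)
    (hpdag : ∀ k t, 0 ≤ pdag k t) (hpstar : ∀ k t, 0 ≤ pstar k t)
    (hGdag : ∀ t, 0 ≤ Gdag t) (hGstar : ∀ t, 0 ≤ Gstar t)
    (hqueue : ∀ (k : Fin K), ∀ t ∈ Finset.Ico t₀ (t₀ + ρ),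
      e k (t + 1) = max (e k t + (pdag k t - Pbar k)) 0)
    (hbdd : ∀ (k : Fin K) (t : ℕ),
      |pdag k t - Pbar k| ≤ Emax ∧ |pstar k t - Pbar k| ≤ Emax)
    (hdpp : ∀ t ∈ Finset.Ico t₀ (t₀ + ρ),
      V * Gdag t + ∑ k, e k t * pdag k t ≤ V * Gstar t + ∑ k, e k t * pstar k t)
    (Ce C : ℝ)
    (hCe : Ce = (1 / 2) * K * Emax ^ 2)
    (hC : C = ρ * Ce + (1 / 2) * ∑ k, (e k t₀) ^ 2
        + Emax * ∑ t ∈ Finset.Ico t₀ (t₀ + ρ), ∑ k, (e k t₀ + ((t - t₀ : ℕ) : ℝ) * Emax)) :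
    ∑ t ∈ Finset.Ico t₀ (t₀ + ρ), Gdag t
      ≤ ∑ t ∈ Finset.Ico t₀ (t₀ + ρ), Gstar t + C / V := by
  have k0 : Fin K := ⟨0, hK⟩
  have hEm : 0 ≤ Emax := le_trans (abs_nonneg _) (hbdd k0 t₀).1
  -- bounds on queue values within the period
  have hbound : ∀ t, t₀ ≤ t → t ≤ t₀ + ρ → ∀ k : Fin K,
      0 ≤ e k t ∧ e k t ≤ e k t₀ + ((t - t₀ : ℕ) : ℝ) * Emax := by
    intro t
    induction t with
    | zero =>
      intro h1 _ k
      have : t₀ = 0 := Nat.le_zero.mp h1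
      subst this
      exact ⟨he0 k, by simp⟩
    | succ t ih =>
      intro h1 h2 k
      rcases eq_or_lt_of_le h1 with heq | hlt
      · rw [← heq]
        exact ⟨he0 k, by simp⟩
      · have hlt' : t₀ ≤ t := Nat.lt_succ_iff.mp hlt
        have htmem : t ∈ Finset.Ico t₀ (t₀ + ρ) :=
          Finset.mem_Ico.mpr ⟨hlt', Nat.lt_of_succ_le h2⟩
        obtain ⟨ih0, ih1⟩ := ih hlt' (le_of_lt (Nat.lt_of_succ_le h2)) k
        have hq := hqueue k t htmem
        have hx := abs_le.mp (hbdd k t).1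
        have hcast : ((t + 1 - t₀ : ℕ) : ℝ) = ((t - t₀ : ℕ) : ℝ) + 1 := by
          rw [Nat.succ_sub hlt']; push_cast; ring
        constructor
        · rw [hq]; exact le_max_right _ _
        · rw [hq, hcast]
          have h3 : e k t + (pdag k t - Pbar k) ≤ e k t + Emax := by linarith [hx.2]
          calc max (e k t + (pdag k t - Pbar k)) 0
              ≤ max (e k t + Emax) 0 := max_le_max h3 le_rfl
            _ = e k t + Emax := max_eq_left (by linarith)
            _ ≤ e k t₀ + (((t - t₀ : ℕ) : ℝ) + 1) * Emax := by nlinarith [ih1]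
  -- per-round drift-plus-penalty inequality
  have key : ∀ t ∈ Finset.Ico t₀ (t₀ + ρ),
      V * Gdag t + ((1/2) * ∑ k, (e k (t+1))^2 - (1/2) * ∑ k, (e k t)^2)
        ≤ Ce + V * Gstar t + Emax * ∑ k, (e k t₀ + ((t - t₀ : ℕ) : ℝ) * Emax) := by
    intro t ht
    obtain ⟨ht1, ht2⟩ := Finset.mem_Ico.mp ht
    have hdrift : ∀ k : Fin K,
        (e k (t+1))^2 ≤ (e k t)^2 + 2 * (e k t) * (pdag k t - Pbar k) + Emax^2 := by
      intro k
      rw [hqueue k t ht]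
      have hx := abs_le.mp (hbdd k t).1
      have he1 := (hbound t ht1 (le_of_lt ht2) k).1
      rcases max_choice (e k t + (pdag k t - Pbar k)) 0 with h | h <;> rw [h] <;>
        nlinarith [sq_nonneg (e k t + (pdag k t - Pbar k)), hx.1, hx.2, hEm]
    have hsumdrift : ∑ k, (e k (t+1))^2
        ≤ ∑ k, (e k t)^2 + 2 * ∑ k, e k t * pdag k t - 2 * ∑ k, e k t * Pbar k
          + K * Emax^2 := by
      calc ∑ k, (e k (t+1))^2
          ≤ ∑ k, ((e k t)^2 + 2 * (e k t) * (pdag k t - Pbar k) + Emax^2) :=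
            Finset.sum_le_sum fun k _ => hdrift k
        _ = ∑ k, (e k t)^2 + 2 * ∑ k, e k t * pdag k t - 2 * ∑ k, e k t * Pbar k
            + K * Emax^2 := by
            simp only [Finset.sum_add_distrib, Finset.sum_const, Finset.card_univ,
              Fintype.card_fin, nsmul_eq_mul]
            rw [show (∑ k : Fin K, 2 * e k t * (pdag k t - Pbar k))
                = 2 * ∑ k, e k t * pdag k t - 2 * ∑ k, e k t * Pbar k from by
              rw [Finset.mul_sum, Finset.mul_sum, ← Finset.sum_sub_distrib]
              exact Finset.sum_congr rfl fun k _ => by ring]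
            ring
    have hstar : ∑ k, e k t * pstar k t
        ≤ ∑ k, e k t * Pbar k
          + Emax * ∑ k, (e k t₀ + ((t - t₀ : ℕ) : ℝ) * Emax) := by
      have h1 : ∑ k, e k t * pstar k t
          ≤ ∑ k, (e k t * Pbar k + (e k t₀ + ((t - t₀ : ℕ) : ℝ) * Emax) * Emax) := by
        apply Finset.sum_le_sum
        intro k _
        obtain ⟨he1, he2⟩ := hbound t ht1 (le_of_lt ht2) k
        have hx := abs_le.mp (hbdd k t).2
        nlinarith [hx.1, hx.2]
      calc ∑ k, e k t * pstar k t ≤ _ := h1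
        _ = ∑ k, e k t * Pbar k
            + Emax * ∑ k, (e k t₀ + ((t - t₀ : ℕ) : ℝ) * Emax) := by
          rw [Finset.sum_add_distrib, Finset.mul_sum]
          congr 1
          exact Finset.sum_congr rfl fun k _ => by ring
    have hd := hdpp t ht
    rw [hCe]
    linarith
  -- sum over the period and telescope
  have hsum := Finset.sum_le_sum key
  have htel : ∑ t ∈ Finset.Ico t₀ (t₀ + ρ),
      ((1/2) * ∑ k, (e k (t+1))^2 - (1/2) * ∑ k, (e k t)^2)
      = (1/2) * ∑ k, (e k (t₀ + ρ))^2 - (1/2) * ∑ k, (e k t₀)^2 := by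
    rw [Finset.sum_Ico_eq_sum_range]
    simp only [Nat.add_sub_cancel_left]
    exact Finset.sum_range_sub (fun i => (1/2) * ∑ k, (e k (t₀ + i))^2) ρ
  rw [Finset.sum_add_distrib, htel, Finset.sum_add_distrib, Finset.sum_add_distrib,
    Finset.sum_const, Nat.card_Ico, Nat.add_sub_cancel_left, nsmul_eq_mul,
    ← Finset.mul_sum, ← Finset.mul_sum, ← Finset.mul_sum] at hsum
  have hLfin : 0 ≤ (1/2 : ℝ) * ∑ k, (e k (t₀ + ρ))^2 := by positivity
  have hmain : V * ∑ t ∈ Finset.Ico t₀ (t₀ + ρ), Gdag t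
      ≤ V * ∑ t ∈ Finset.Ico t₀ (t₀ + ρ), Gstar t + C := by
    rw [hC]; linarith
  have hdiv : C / V * V = C := div_mul_cancel₀ _ (ne_of_gt hV)
  nlinarith [hmain, hdiv, hV]
end

section
/- Under the same setup as the performance bound of Theorem 2 — K queues e_k(t+1) = max{ e_k(t) + p_k^†(t) − P̄_k, 0 } with e_k(t₀) ≥ 0 over a period of ρ rounds starting at t₀; |p_k(t) − P̄_k| ≤ E_max for both policies; and per-round drift-plus-penalty minimization V·G_t^† + Σ_k e_k(t)·p_k^†(t) ≤ V·G_t^* + Σ_k e_k(t)·p_k^*(t) for every t with V > 0 and G_t^†, G_t^* ≥ 0 — the cumulative energy overshoot of every device k is bounded as Σ_{t=t₀}^{t₀+ρ−1} ( p_k^†(t) − P̄_k ) ≤ sqrt( 2( C + V·Σ_{t=t₀}^{t₀+ρ−1} G_t^* ) ) − e_k(t₀), where C = ρ·C_e + (1/2)Σ_k e_k(t₀)² + E_max · Σ_{t=t₀}^{t₀+ρ−1} Σ_k ( e_k(t₀) + (t − t₀)·E_max ) and C_e = (1/2)K·E_max². -/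
/-- Energy-backlog part of Theorem 2 of the paper (O(√V) bound, eq. (36)),
stated for one period of `ρ` rounds starting at round `t₀`: under the virtual
energy-deficit queue dynamics, bounded power deviations, and per-round
drift-plus-penalty minimization, the cumulative energy overshoot of every
device is `O(√V)`-bounded. -/
theorem stmt6 (K ρ t₀ : ℕ) (hK : 1 ≤ K) (hρ : 1 ≤ ρ)
    (Emax V : ℝ) (hV : 0 < V)
    (e : Fin K → ℕ → ℝ) (pdag pstar : Fin K → ℕ → ℝ) (Pbar : Fin K → ℝ)
    (Gdag Gstar : ℕ → ℝ)
    (he0 : ∀ k, 0 ≤ e k t₀)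
    (hPbar : ∀ k, 0 < Pbar k)
    (hpdag : ∀ k t, 0 ≤ pdag k t) (hpstar : ∀ k t, 0 ≤ pstar k t)
    (hGdag : ∀ t, 0 ≤ Gdag t) (hGstar : ∀ t, 0 ≤ Gstar t)
    (hqueue : ∀ (k : Fin K), ∀ t ∈ Finset.Ico t₀ (t₀ + ρ),
      e k (t + 1) = max (e k t + (pdag k t - Pbar k)) 0)
    (hbdd : ∀ (k : Fin K) (t : ℕ),
      |pdag k t - Pbar k| ≤ Emax ∧ |pstar k t - Pbar k| ≤ Emax)
    (hdpp : ∀ t ∈ Finset.Ico t₀ (t₀ + ρ),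
      V * Gdag t + ∑ k, e k t * pdag k t ≤ V * Gstar t + ∑ k, e k t * pstar k t)
    (Ce C : ℝ)
    (hCe : Ce = (1 / 2) * K * Emax ^ 2)
    (hC : C = ρ * Ce + (1 / 2) * ∑ k, (e k t₀) ^ 2
        + Emax * ∑ t ∈ Finset.Ico t₀ (t₀ + ρ), ∑ k, (e k t₀ + ((t - t₀ : ℕ) : ℝ) * Emax)) :
    ∀ k : Fin K, ∑ t ∈ Finset.Ico t₀ (t₀ + ρ), (pdag k t - Pbar k)
      ≤ Real.sqrt (2 * (C + V * ∑ t ∈ Finset.Ico t₀ (t₀ + ρ), Gstar t)) - e k t₀ := by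
  intro k
  have hE : 0 ≤ Emax := le_trans (abs_nonneg _) (hbdd ⟨0, hK⟩ t₀).1
  -- queue positivity
  have epos : ∀ n, n ≤ ρ → ∀ j : Fin K, 0 ≤ e j (t₀ + n) := by
    intro n
    induction n with
    | zero => intro _ j; simpa using he0 j
    | succ m ih =>
      intro hm j
      have hmem : t₀ + m ∈ Finset.Ico t₀ (t₀ + ρ) :=
        Finset.mem_Ico.mpr ⟨Nat.le_add_right _ _, by omega⟩
      rw [show t₀ + (m + 1) = (t₀ + m) + 1 from rfl, hqueue j _ hmem]
      exact le_max_right _ _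
  -- queue growth bound
  have ebound : ∀ n, n ≤ ρ → ∀ j : Fin K, e j (t₀ + n) ≤ e j t₀ + n * Emax := by
    intro n
    induction n with
    | zero => intro _ j; simp
    | succ m ih =>
      intro hm j
      have hmem : t₀ + m ∈ Finset.Ico t₀ (t₀ + ρ) :=
        Finset.mem_Ico.mpr ⟨Nat.le_add_right _ _, by omega⟩
      rw [show t₀ + (m + 1) = (t₀ + m) + 1 from rfl, hqueue j _ hmem]
      have h1 : e j (t₀ + m) + (pdag j (t₀ + m) - Pbar j)
          ≤ e j t₀ + (m + 1 : ℕ) * Emax := by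
        have := (abs_le.mp (hbdd j (t₀ + m)).1).2
        have := ih (by omega) j
        push_cast
        linarith
      have h2 : (0 : ℝ) ≤ e j t₀ + (m + 1 : ℕ) * Emax := by
        have hp : (0:ℝ) ≤ ((m + 1 : ℕ) : ℝ) * Emax := mul_nonneg (Nat.cast_nonneg _) hE
        linarith [he0 j]
      exact max_le h1 h2
  -- telescoping overshoot
  have tele : ∀ n, n ≤ ρ →
      ∑ t ∈ Finset.Ico t₀ (t₀ + n), (pdag k t - Pbar k) ≤ e k (t₀ + n) - e k t₀ := by
    intro n
    induction n with
    | zero => intro _; simp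
    | succ m ih =>
      intro hm
      have hmem : t₀ + m ∈ Finset.Ico t₀ (t₀ + ρ) :=
        Finset.mem_Ico.mpr ⟨Nat.le_add_right _ _, by omega⟩
      rw [show t₀ + (m + 1) = (t₀ + m) + 1 from rfl,
        Finset.sum_Ico_succ_top (Nat.le_add_right _ _)]
      have hq : e k (t₀ + m) + (pdag k (t₀ + m) - Pbar k) ≤ e k ((t₀ + m) + 1) := by
        rw [hqueue k _ hmem]; exact le_max_left _ _
      have := ih (by omega)
      linarith
  -- Lyapunov drift
  set S : ℕ → ℝ := fun t => ∑ j, (e j t₀ + ((t - t₀ : ℕ) : ℝ) * Emax) with hS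
  have lyap : ∀ n, n ≤ ρ →
      ∑ j, (e j (t₀ + n)) ^ 2 ≤ ∑ j, (e j t₀) ^ 2
        + ∑ t ∈ Finset.Ico t₀ (t₀ + n), (2 * Ce + 2 * V * Gstar t + 2 * Emax * S t) := by
    intro n
    induction n with
    | zero => intro _; simp
    | succ m ih =>
      intro hm
      have hmlt : m < ρ := hm
      have hmem : t₀ + m ∈ Finset.Ico t₀ (t₀ + ρ) :=
        Finset.mem_Ico.mpr ⟨Nat.le_add_right _ _, by omega⟩
      set t := t₀ + m with ht
      -- per-coordinate square bound
      have hsq : ∀ j : Fin K, (e j (t + 1)) ^ 2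
          ≤ (e j t) ^ 2 + 2 * (e j t * (pdag j t - Pbar j)) + Emax ^ 2 := by
        intro j
        rw [hqueue j _ hmem]
        have h1 : (max (e j t + (pdag j t - Pbar j)) 0) ^ 2
            ≤ (e j t + (pdag j t - Pbar j)) ^ 2 := by
          rcases le_or_gt 0 (e j t + (pdag j t - Pbar j)) with h | h
          · rw [max_eq_left h]
          · rw [max_eq_right h.le]; simpa using sq_nonneg (e j t + (pdag j t - Pbar j))
        have h2 : (pdag j t - Pbar j) ^ 2 ≤ Emax ^ 2 := by
          have := (hbdd j t).1
          nlinarith [abs_nonneg (pdag j t - Pbar j), le_abs_self (pdag j t - Pbar j),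
            neg_abs_le (pdag j t - Pbar j)]
        nlinarith
      -- sum over j
      have hsum : ∑ j, (e j (t + 1)) ^ 2
          ≤ ∑ j, (e j t) ^ 2 + 2 * ∑ j, e j t * (pdag j t - Pbar j) + 2 * Ce := by
        have := Finset.sum_le_sum (fun j (_ : j ∈ Finset.univ) => hsq j)
        simp only [Finset.sum_add_distrib, ← Finset.mul_sum, Finset.sum_const,
          Finset.card_univ, Fintype.card_fin, nsmul_eq_mul] at this
        rw [hCe]; linarith
      -- dpp bound on the cross term
      have hcross : ∑ j, e j t * (pdag j t - Pbar j) ≤ V * Gstar t + Emax * S t := by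
        have hd := hdpp t hmem
        have h1 : ∑ j, e j t * pdag j t ≤ V * Gstar t + ∑ j, e j t * pstar j t := by
          have := mul_nonneg hV.le (hGdag t); linarith
        have h2 : ∑ j, e j t * (pstar j t - Pbar j) ≤ Emax * S t := by
          rw [hS, Finset.mul_sum]
          apply Finset.sum_le_sum
          intro j _
          have he1 : 0 ≤ e j t := epos m hmlt.le j
          have he2 : e j t ≤ e j t₀ + m * Emax := ebound m hmlt.le j
          have hb := (abs_le.mp (hbdd j t).2).2
          have : ((t - t₀ : ℕ) : ℝ) = (m : ℝ) := by
            rw [ht]; push_cast [Nat.add_sub_cancel_left]; ring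
          rw [this]
          calc e j t * (pstar j t - Pbar j) ≤ e j t * Emax := by
                exact mul_le_mul_of_nonneg_left hb he1
            _ ≤ (e j t₀ + m * Emax) * Emax := mul_le_mul_of_nonneg_right he2 hE
            _ = Emax * (e j t₀ + m * Emax) := by ring
        have hexp : ∀ j : Fin K, e j t * (pdag j t - Pbar j)
            = e j t * pdag j t - e j t * Pbar j := fun j => by ring
        have hexp2 : ∀ j : Fin K, e j t * (pstar j t - Pbar j)
            = e j t * pstar j t - e j t * Pbar j := fun j => by ring
        simp only [hexp] at *
        simp only [hexp2] at h2
        rw [Finset.sum_sub_distrib] at *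
        linarith
      have hstep : ∑ j, (e j (t + 1)) ^ 2
          ≤ ∑ j, (e j t) ^ 2 + (2 * Ce + 2 * V * Gstar t + 2 * Emax * S t) := by
        linarith
      have key : ∑ j, (e j (t + 1)) ^ 2 ≤ ∑ j, (e j t₀) ^ 2
          + ∑ u ∈ Finset.Ico t₀ (t + 1), (2 * Ce + 2 * V * Gstar u + 2 * Emax * S u) := by
        rw [Finset.sum_Ico_succ_top (show t₀ ≤ t from Nat.le_add_right _ _)]
        have hih := ih (Nat.le_of_lt hmlt)
        linarith
      exact key
  -- conclusion
  have hfin := lyap ρ le_rfl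
  have hsumC : ∑ t ∈ Finset.Ico t₀ (t₀ + ρ), (2 * Ce + 2 * V * Gstar t + 2 * Emax * S t)
      = 2 * ρ * Ce + 2 * V * ∑ t ∈ Finset.Ico t₀ (t₀ + ρ), Gstar t
        + 2 * Emax * ∑ t ∈ Finset.Ico t₀ (t₀ + ρ), S t := by
    rw [Finset.sum_add_distrib, Finset.sum_add_distrib, Finset.sum_const,
      Nat.card_Ico, ← Finset.mul_sum, ← Finset.mul_sum, Nat.add_sub_cancel_left]
    push_cast
    ring
  have hsingle : (e k (t₀ + ρ)) ^ 2 ≤ ∑ j, (e j (t₀ + ρ)) ^ 2 := by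
    apply Finset.single_le_sum (f := fun j => (e j (t₀ + ρ)) ^ 2)
      (fun j _ => sq_nonneg _) (Finset.mem_univ k)
  have hX : (e k (t₀ + ρ)) ^ 2
      ≤ 2 * (C + V * ∑ t ∈ Finset.Ico t₀ (t₀ + ρ), Gstar t) := by
    rw [hC]
    have := hfin
    rw [hsumC] at this
    linarith
  have hsqrt : e k (t₀ + ρ) ≤
      Real.sqrt (2 * (C + V * ∑ t ∈ Finset.Ico t₀ (t₀ + ρ), Gstar t)) := by
    have h := Real.sqrt_le_sqrt hX
    rwa [Real.sqrt_sq (epos ρ le_rfl k)] at h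
  have := tele ρ le_rfl
  linarith
end

section
/- Let K be a nonempty finite index set, S ⊆ K a nonempty subset, D_k > 0 real weights for k ∈ K, and g_k ∈ ℝ^d vectors with ‖g_k‖² ≤ γ for all k ∈ K, where γ > 0. Let D = Σ_{k∈K} D_k and D_S = Σ_{i∈S} D_i, and define the device-selection gradient residual ε_d = ( Σ_{i∈S} D_i g_i ) / D_S − ( Σ_{k∈K} D_k g_k ) / D. Then ‖ε_d‖ ≤ 2·√γ·(D − D_S)/D, and hence ‖ε_d‖² ≤ 4·γ·(D − D_S)² / D². -/
/-- Bound on the device-selection gradient residual (Appendix B of the paper):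
the difference between the weighted average gradient of the scheduled subset
`S` and the full-population weighted average gradient is bounded by
`2√γ (D − D_S)/D`. -/
theorem stmt15 {ι : Type*} {d : ℕ} (K S : Finset ι) (hS : S ⊆ K)
    (hKne : K.Nonempty) (hSne : S.Nonempty)
    (D : ι → ℝ) (hD : ∀ k ∈ K, 0 < D k) (γ : ℝ) (hγ : 0 < γ)
    (g : ι → EuclideanSpace ℝ (Fin d))
    (hg : ∀ k ∈ K, ‖g k‖ ^ 2 ≤ γ)
    (Dtot DS : ℝ) (hDtot : Dtot = ∑ k ∈ K, D k) (hDS : DS = ∑ i ∈ S, D i)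
    (εd : EuclideanSpace ℝ (Fin d))
    (hεd : εd = DS⁻¹ • ∑ i ∈ S, D i • g i - Dtot⁻¹ • ∑ k ∈ K, D k • g k) :
    ‖εd‖ ≤ 2 * Real.sqrt γ * (Dtot - DS) / Dtot ∧
    ‖εd‖ ^ 2 ≤ 4 * γ * (Dtot - DS) ^ 2 / Dtot ^ 2 := by
  classical
  have hDSpos : 0 < DS := by
    rw [hDS]; exact Finset.sum_pos (fun i hi => hD i (hS hi)) hSne
  have hDpos : 0 < Dtot := by
    rw [hDtot]; exact Finset.sum_pos hD hKne
  have hle : DS ≤ Dtot := by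
    rw [hDS, hDtot]
    exact Finset.sum_le_sum_of_subset_of_nonneg hS
      (fun i hi _ => (hD i hi).le)
  have hsqrt : 0 < Real.sqrt γ := Real.sqrt_pos.mpr hγ
  have hgle : ∀ k ∈ K, ‖g k‖ ≤ Real.sqrt γ := fun k hk => by
    have := hg k hk
    nlinarith [norm_nonneg (g k), Real.sq_sqrt hγ.le, Real.sqrt_nonneg γ]
  -- bound on partial sums
  have key : ∀ T : Finset ι, T ⊆ K →
      ‖∑ i ∈ T, D i • g i‖ ≤ (∑ i ∈ T, D i) * Real.sqrt γ := by
    intro T hT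
    calc ‖∑ i ∈ T, D i • g i‖ ≤ ∑ i ∈ T, ‖D i • g i‖ := norm_sum_le _ _
      _ ≤ ∑ i ∈ T, D i * Real.sqrt γ := by
          refine Finset.sum_le_sum fun i hi => ?_
          rw [norm_smul, Real.norm_eq_abs, abs_of_pos (hD i (hT hi))]
          exact mul_le_mul_of_nonneg_left (hgle i (hT hi)) (hD i (hT hi)).le
      _ = (∑ i ∈ T, D i) * Real.sqrt γ := (Finset.sum_mul _ _ _).symm
  have hsplit : (∑ k ∈ K, D k • g k)
      = (∑ i ∈ S, D i • g i) + ∑ k ∈ K \ S, D k • g k := by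
    rw [add_comm, Finset.sum_sdiff hS]
  have hεd' : εd = (DS⁻¹ - Dtot⁻¹) • (∑ i ∈ S, D i • g i)
      - Dtot⁻¹ • ∑ k ∈ K \ S, D k • g k := by
    rw [hεd, hsplit, smul_add, sub_smul]
    abel
  have hb1 : ‖εd‖ ≤ (DS⁻¹ - Dtot⁻¹) * (DS * Real.sqrt γ)
      + Dtot⁻¹ * ((Dtot - DS) * Real.sqrt γ) := by
    rw [hεd']
    refine (norm_sub_le _ _).trans ?_
    gcongr ?_ + ?_
    · rw [norm_smul, Real.norm_eq_abs, abs_of_nonneg (by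
        have : Dtot⁻¹ ≤ DS⁻¹ := by
          apply inv_anti₀ hDSpos hle
        linarith)]
      have h1 := key S hS
      rw [← hDS] at h1
      exact mul_le_mul_of_nonneg_left h1 (by
        have : Dtot⁻¹ ≤ DS⁻¹ := inv_anti₀ hDSpos hle
        linarith)
    · rw [norm_smul, Real.norm_eq_abs, abs_of_pos (inv_pos.mpr hDpos)]
      have h2 := key (K \ S) (Finset.sdiff_subset)
      have hsum : (∑ i ∈ K \ S, D i) = Dtot - DS := by
        rw [hDtot, hDS, ← Finset.sum_sdiff hS]; ring
      rw [hsum] at h2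
      exact mul_le_mul_of_nonneg_left h2 (inv_pos.mpr hDpos).le
  have heq : (DS⁻¹ - Dtot⁻¹) * (DS * Real.sqrt γ)
      + Dtot⁻¹ * ((Dtot - DS) * Real.sqrt γ)
      = 2 * Real.sqrt γ * (Dtot - DS) / Dtot := by
    field_simp
    ring
  have h1 : ‖εd‖ ≤ 2 * Real.sqrt γ * (Dtot - DS) / Dtot := heq ▸ hb1
  refine ⟨h1, ?_⟩
  have hrhs : 0 ≤ 2 * Real.sqrt γ * (Dtot - DS) / Dtot := by
    apply div_nonneg _ hDpos.le
    have : 0 ≤ Dtot - DS := by linarith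
    positivity
  have h2 := pow_le_pow_left₀ (norm_nonneg εd) h1 2
  calc ‖εd‖ ^ 2 ≤ (2 * Real.sqrt γ * (Dtot - DS) / Dtot) ^ 2 := h2
    _ = 4 * γ * (Dtot - DS) ^ 2 / Dtot ^ 2 := by
        rw [div_pow]
        congr 1
        have : Real.sqrt γ ^ 2 = γ := Real.sq_sqrt hγ.le
        nlinarith [this]
end
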